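/- Let $(e^{tA})_{t \ge 0}$ be a bounded $C_0$-semigroup on a Banach space $E$ which is Abel ergodic with Abel ergodic projection $Q$. Then the semigroup is mean ergodic, its mean ergodic projection $P$ equals $Q$, and $\lim_{t \to \infty} \|e^{tA}\|/t = 0$. -/

import Mathlib

open Filter Topology

/-- `R` is the resolvent of the (unbounded) operator `A` at `lam`. -/
def IsResolventAt {E : Type*} [NormedAddCommGroup E] [NormedSpace ℝ E]
    (A : E →ₗ.[ℝ] E) (lam : ℝ) (R : E →L[ℝ] E) : Prop :=
  (∀ x : A.domain, R (lam • (x : E) - A x) = x) ∧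
  (∀ f : E, ∃ h : R f ∈ A.domain, lam • R f - A ⟨R f, h⟩ = f)

lemma fund_lemma {E : Type*} [NormedAddCommGroup E] [NormedSpace ℝ E] [CompleteSpace E]
    (T : ℝ → E →L[ℝ] E)
    (hT0 : T 0 = 1)
    (hTsemi : ∀ s t : ℝ, 0 ≤ s → 0 ≤ t → T (s + t) = (T s).comp (T t))
    (hTcont : ∀ f : E, ContinuousOn (fun t => T t f) (Set.Ici 0))
    (A : E →ₗ.[ℝ] E)
    (hgen : ∀ x : A.domain,
      Tendsto (fun h : ℝ => h⁻¹ • (T h (x : E) - (x : E))) (𝓝[>] 0) (𝓝 (A x)))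
    (x : A.domain) {t : ℝ} (ht : 0 ≤ t) :
    ∫ s in (0:ℝ)..t, T s (A x) = T t (x : E) - (x : E) := by
  have hcont : ContinuousOn (fun s => T s (x : E)) (Set.Icc 0 t) :=
    (hTcont _).mono Set.Icc_subset_Ici_self
  have hint : IntervalIntegrable (fun s => T s (A x)) MeasureTheory.volume 0 t := by
    apply ContinuousOn.intervalIntegrable
    apply (hTcont _).mono
    rw [Set.uIcc_of_le ht]; exact Set.Icc_subset_Ici_self
  have hderiv : ∀ s ∈ Set.Ioo 0 t,
      HasDerivWithinAt (fun s => T s (x:E)) (T s (A x)) (Set.Ioi s) s := by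
    intro s hs
    rw [hasDerivWithinAt_iff_tendsto_slope]
    have hdiff : Set.Ioi s \ {s} = Set.Ioi s := Set.diff_singleton_eq_self (by simp)
    rw [hdiff]
    have h1 : Tendsto (fun y : ℝ => y - s) (𝓝[>] s) (𝓝[>] 0) := by
      apply tendsto_nhdsWithin_of_tendsto_nhds_of_eventually_within
      · have : Tendsto (fun y : ℝ => y - s) (𝓝 s) (𝓝 (s - s)) :=
          (continuous_id.sub continuous_const).tendsto s
        rw [sub_self] at this
        exact this.mono_left nhdsWithin_le_nhds
      · filter_upwards [self_mem_nhdsWithin] with y hy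
        simpa [Set.mem_Ioi] using sub_pos.2 (show s < y from hy)
    have h2 : Tendsto (fun h : ℝ => T s (h⁻¹ • (T h (x:E) - (x:E)))) (𝓝[>] 0)
        (𝓝 (T s (A x))) :=
      ((T s).continuous.tendsto _).comp (hgen x)
    apply (h2.comp h1).congr'
    filter_upwards [self_mem_nhdsWithin] with y hy
    have hys : (0:ℝ) ≤ y - s := (sub_pos.2 hy).le
    have hTy : T y (x : E) = T s (T (y - s) (x : E)) := by
      have hsum : s + (y - s) = y := by ring
      conv_lhs => rw [← hsum, hTsemi s (y-s) hs.1.le hys]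
      rfl
    simp only [Function.comp, slope_def_module, hTy, map_smul, map_sub]
  have key := intervalIntegral.integral_eq_sub_of_hasDeriv_right_of_le ht hcont hderiv hint
  rw [key, hT0]; simp

/-- A bounded `C₀`-semigroup which is Abel ergodic (with Abel ergodic projection `Q`) is
mean ergodic, its mean ergodic projection equals `Q`, and `‖e^{tA}‖/t → 0`. -/
theorem stmt15 {E : Type*} [NormedAddCommGroup E] [NormedSpace ℝ E] [CompleteSpace E]
    (T : ℝ → E →L[ℝ] E)
    (hT0 : T 0 = 1)
    (hTsemi : ∀ s t : ℝ, 0 ≤ s → 0 ≤ t → T (s + t) = (T s).comp (T t))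
    (hTcont : ∀ f : E, ContinuousOn (fun t => T t f) (Set.Ici 0))
    -- the semigroup is bounded:
    (hbdd : ∃ M : ℝ, ∀ t ≥ (0:ℝ), ‖T t‖ ≤ M)
    -- `A` is the generator of the semigroup:
    (A : E →ₗ.[ℝ] E)
    (hgen : ∀ x : A.domain,
      Tendsto (fun h : ℝ => h⁻¹ • (T h (x : E) - (x : E))) (𝓝[>] 0) (𝓝 (A x)))
    -- Abel ergodicity: `(0, lam0) ⊆ ρ(A)`, `λ R(λ, A)` uniformly bounded near `0` and
    -- strongly convergent to the Abel ergodic projection `Q` as `λ ↓ 0`: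
    (lam0 : ℝ) (hlam0 : 0 < lam0)
    (R : ℝ → E →L[ℝ] E)
    (hR : ∀ lam ∈ Set.Ioo 0 lam0, IsResolventAt A lam (R lam))
    (habelbdd : ∃ M : ℝ, ∀ lam ∈ Set.Ioo 0 lam0, ‖lam • R lam‖ ≤ M)
    (Q : E →L[ℝ] E)
    (habel : ∀ f : E, Tendsto (fun lam : ℝ => lam • R lam f) (𝓝[>] 0) (𝓝 (Q f))) :
    -- mean ergodicity with mean ergodic projection `P = Q`:
    (∀ f : E, Tendsto (fun r : ℝ => r⁻¹ • ∫ s in (0:ℝ)..r, T s f) atTop (𝓝 (Q f))) ∧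
    Tendsto (fun t : ℝ => ‖T t‖ / t) atTop (𝓝 0) := by
  obtain ⟨M, hM⟩ := hbdd
  obtain ⟨M₂, hM₂⟩ := habelbdd
  have hM0 : 0 ≤ M := le_trans (norm_nonneg _) (hM 0 le_rfl)
  have fund := fund_lemma T hT0 hTsemi hTcont A hgen
  have hres : ∀ lam ∈ Set.Ioo 0 lam0, ∀ f : E, ∃ h : R lam f ∈ A.domain,
      A ⟨R lam f, h⟩ = lam • R lam f - f := by
    intro lam hlam f
    obtain ⟨h, hh⟩ := (hR lam hlam).2 f
    refine ⟨h, ?_⟩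
    have h3 := sub_sub_cancel (lam • R lam f) ((A ⟨R lam f, h⟩ : E))
    rw [hh] at h3
    exact h3.symm
  have hid : ∀ lam ∈ Set.Ioo 0 lam0, ∀ f : E, ∀ t ≥ (0:ℝ),
      T t (R lam f) - R lam f = ∫ s in (0:ℝ)..t, T s (lam • R lam f - f) := by
    intro lam hlam f t ht
    obtain ⟨h, hAx⟩ := hres lam hlam f
    have h2 := fund ⟨R lam f, h⟩ ht
    rw [hAx] at h2
    exact h2.symm
  -- Q f is a fixed vector
  have fixQ : ∀ t ≥ (0:ℝ), ∀ f : E, T t (Q f) = Q f := by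
    intro t ht f
    have hG1 : Tendsto (fun lam : ℝ => T t (lam • R lam f) - lam • R lam f) (𝓝[>] 0)
        (𝓝 (T t (Q f) - Q f)) :=
      (((T t).continuous.tendsto _).comp (habel f)).sub (habel f)
    have hG2 : Tendsto (fun lam : ℝ => T t (lam • R lam f) - lam • R lam f) (𝓝[>] 0) (𝓝 0) := by
      apply squeeze_zero_norm' (a := fun lam => lam * (M * ((M₂ + 1) * ‖f‖) * |t|))
      · filter_upwards [Ioo_mem_nhdsGT_of_mem (Set.mem_Ico.2 ⟨le_rfl, hlam0⟩),
          self_mem_nhdsWithin] with lam hlam hlampos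
        have hlam' : (0:ℝ) < lam := hlampos
        have hkey : T t (lam • R lam f) - lam • R lam f
            = lam • ∫ s in (0:ℝ)..t, T s (lam • R lam f - f) := by
          rw [map_smul, ← smul_sub, hid lam hlam f t ht]
        rw [hkey, norm_smul, Real.norm_eq_abs, abs_of_pos hlam']
        apply mul_le_mul_of_nonneg_left ?_ hlam'.le
        calc ‖∫ s in (0:ℝ)..t, T s (lam • R lam f - f)‖
            ≤ M * ((M₂ + 1) * ‖f‖) * |t - 0| := by
              apply intervalIntegral.norm_integral_le_of_norm_le_const
              intro s hs
              rw [Set.uIoc_of_le ht] at hs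
              calc ‖T s (lam • R lam f - f)‖ ≤ ‖T s‖ * ‖lam • R lam f - f‖ :=
                    (T s).le_opNorm _
                _ ≤ M * ((M₂ + 1) * ‖f‖) := by
                    apply mul_le_mul (hM s hs.1.le) ?_ (norm_nonneg _) hM0
                    calc ‖lam • R lam f - f‖ ≤ ‖lam • R lam f‖ + ‖f‖ := norm_sub_le _ _
                      _ ≤ M₂ * ‖f‖ + ‖f‖ := by
                          have : ‖(lam • R lam) f‖ ≤ ‖lam • R lam‖ * ‖f‖ :=
                            (lam • R lam).le_opNorm f
                          rw [ContinuousLinearMap.smul_apply] at this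
                          have h2 := mul_le_mul_of_nonneg_right (hM₂ lam hlam) (norm_nonneg f)
                          linarith
                      _ = (M₂ + 1) * ‖f‖ := by ring
          _ = M * ((M₂ + 1) * ‖f‖) * |t| := by rw [sub_zero]
      · have : Tendsto (fun lam : ℝ => lam) (𝓝[>] 0) (𝓝 0) :=
          tendsto_id.mono_left nhdsWithin_le_nhds
        simpa using this.mul_const (M * ((M₂ + 1) * ‖f‖) * |t|)
    have := tendsto_nhds_unique hG1 hG2
    have := sub_eq_zero.mp this
    exact this
  have hInt : ∀ (v : E) (r : ℝ), 0 ≤ r →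
      IntervalIntegrable (fun s => T s v) MeasureTheory.volume 0 r := by
    intro v r hr
    apply ContinuousOn.intervalIntegrable
    apply (hTcont v).mono
    rw [Set.uIcc_of_le hr]; exact Set.Icc_subset_Ici_self
  have hCbound : ∀ (v : E) (r : ℝ), 0 < r →
      ‖r⁻¹ • ∫ s in (0:ℝ)..r, T s v‖ ≤ M * ‖v‖ := by
    intro v r hr
    rw [norm_smul, norm_inv, Real.norm_eq_abs, abs_of_pos hr]
    have h1 : ‖∫ s in (0:ℝ)..r, T s v‖ ≤ M * ‖v‖ * |r - 0| := by
      apply intervalIntegral.norm_integral_le_of_norm_le_const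
      intro s hs
      rw [Set.uIoc_of_le hr.le] at hs
      calc ‖T s v‖ ≤ ‖T s‖ * ‖v‖ := (T s).le_opNorm v
        _ ≤ M * ‖v‖ := mul_le_mul_of_nonneg_right (hM s hs.1.le) (norm_nonneg v)
    calc r⁻¹ * ‖∫ s in (0:ℝ)..r, T s v‖ ≤ r⁻¹ * (M * ‖v‖ * |r - 0|) := by
          gcongr
        _ = M * ‖v‖ := by
          rw [sub_zero, abs_of_pos hr]; field_simp
  constructor
  · intro f
    rw [Metric.tendsto_atTop]
    intro ε hε
    set δ := ε / (2 * (M + 1)) with hδdef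
    have hδ : 0 < δ := by positivity
    have hev := (habel f).eventually (Metric.ball_mem_nhds (Q f) hδ)
    obtain ⟨lam, hball, hlam⟩ :=
      (hev.and (Ioo_mem_nhdsGT_of_mem (Set.mem_Ico.2 ⟨le_rfl, hlam0⟩))).exists
    obtain ⟨hmem, hAx⟩ := hres lam hlam f
    have hclose : ‖lam • R lam f - Q f‖ < δ := by
      rw [← dist_eq_norm]
      exact hball
    set x : E := R lam f with hxdef
    refine ⟨max 1 (2 * ((M + 1) * ‖x‖ + 1) / ε), fun r hr => ?_⟩
    have hr1 : (1:ℝ) ≤ r := le_trans (le_max_left _ _) hr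
    have hr0 : (0:ℝ) < r := lt_of_lt_of_le zero_lt_one hr1
    have hrK : 2 * ((M + 1) * ‖x‖ + 1) / ε ≤ r := le_trans (le_max_right _ _) hr
    -- ∫ of Q f
    have hQint : ∫ s in (0:ℝ)..r, T s (Q f) = (r - 0) • Q f := by
      rw [intervalIntegral.integral_congr (g := fun _ => Q f) ?_,
        intervalIntegral.integral_const]
      intro s hs
      rw [Set.uIcc_of_le hr0.le] at hs
      exact fixQ s hs.1 f
    have h2 : ∫ s in (0:ℝ)..r, T s (f - lam • R lam f) = x - T r x := by
      have hid' := hid lam hlam f r hr0.le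
      calc ∫ s in (0:ℝ)..r, T s (f - lam • R lam f)
          = ∫ s in (0:ℝ)..r, -(T s (lam • R lam f - f)) := by
            apply intervalIntegral.integral_congr
            intro s _
            show T s (f - lam • R lam f) = -(T s (lam • R lam f - f))
            rw [show f - lam • R lam f = -(lam • R lam f - f) from by abel, map_neg]
        _ = -(∫ s in (0:ℝ)..r, T s (lam • R lam f - f)) := intervalIntegral.integral_neg
        _ = x - T r x := by rw [← hid']; abel
    have h1 : ∫ s in (0:ℝ)..r, T s f
        = (∫ s in (0:ℝ)..r, T s (f - lam • R lam f))
          + (∫ s in (0:ℝ)..r, T s (lam • R lam f - Q f))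
          + ∫ s in (0:ℝ)..r, T s (Q f) := by
      rw [← intervalIntegral.integral_add (hInt _ _ hr0.le) (hInt _ _ hr0.le),
        ← intervalIntegral.integral_add ((hInt _ _ hr0.le).add (hInt _ _ hr0.le))
          (hInt _ _ hr0.le)]
      apply intervalIntegral.integral_congr
      intro s _
      show T s f = T s (f - lam • R lam f) + T s (lam • R lam f - Q f) + T s (Q f)
      rw [← map_add, ← map_add]
      congr 1
      abel
    have hsplit : (r⁻¹ • ∫ s in (0:ℝ)..r, T s f) - Q f
        = r⁻¹ • (x - T r x) + r⁻¹ • ∫ s in (0:ℝ)..r, T s (lam • R lam f - Q f) := by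
      rw [h1, h2, hQint, smul_add, smul_add, sub_zero, smul_smul,
        inv_mul_cancel₀ (ne_of_gt hr0), one_smul]
      abel
    rw [dist_eq_norm, hsplit]
    have hb1 : ‖r⁻¹ • (x - T r x)‖ < ε / 2 := by
      rw [norm_smul, norm_inv, Real.norm_eq_abs, abs_of_pos hr0]
      have hn : ‖x - T r x‖ ≤ (M + 1) * ‖x‖ := by
        calc ‖x - T r x‖ ≤ ‖x‖ + ‖T r x‖ := norm_sub_le _ _
          _ ≤ ‖x‖ + M * ‖x‖ := by
            have := (T r).le_opNorm x
            have h2 := mul_le_mul_of_nonneg_right (hM r hr0.le) (norm_nonneg x)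
            linarith
          _ = (M + 1) * ‖x‖ := by ring
      have hK : (0:ℝ) < (M + 1) * ‖x‖ + 1 := by positivity
      have hre : 2 * ((M + 1) * ‖x‖ + 1) ≤ r * ε := by
        rw [div_le_iff₀ hε] at hrK
        linarith
      calc r⁻¹ * ‖x - T r x‖ ≤ r⁻¹ * ((M + 1) * ‖x‖) := by gcongr
        _ < ε / 2 := by
          rw [inv_mul_lt_iff₀ hr0] -- (M+1)*‖x‖ < r * (ε/2)
          nlinarith [norm_nonneg x]
    have hb2 : ‖r⁻¹ • ∫ s in (0:ℝ)..r, T s (lam • R lam f - Q f)‖ ≤ ε / 2 := by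
      calc ‖r⁻¹ • ∫ s in (0:ℝ)..r, T s (lam • R lam f - Q f)‖
          ≤ M * ‖lam • R lam f - Q f‖ := hCbound _ r hr0
        _ ≤ M * δ := mul_le_mul_of_nonneg_left hclose.le hM0
        _ ≤ ε / 2 := by
          rw [hδdef, mul_comm, div_mul_eq_mul_div,
            div_le_div_iff₀ (by positivity) (by norm_num)]
          nlinarith
    calc ‖r⁻¹ • (x - T r x) + r⁻¹ • ∫ s in (0:ℝ)..r, T s (lam • R lam f - Q f)‖
        ≤ ‖r⁻¹ • (x - T r x)‖ + ‖r⁻¹ • ∫ s in (0:ℝ)..r, T s (lam • R lam f - Q f)‖ :=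
          norm_add_le _ _
      _ < ε / 2 + ε / 2 := add_lt_add_of_lt_of_le hb1 hb2
      _ = ε := by ring
  · apply squeeze_zero' (g := fun t : ℝ => M / t)
    · filter_upwards [eventually_ge_atTop (1:ℝ)] with t ht
      positivity
    · filter_upwards [eventually_ge_atTop (1:ℝ)] with t ht
      have ht0 : (0:ℝ) < t := lt_of_lt_of_le zero_lt_one ht
      gcongr
      exact hM t ht0.le
    · exact tendsto_const_nhds.div_atTop tendsto_id
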